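/- Let F be a binary cluster family on a finite set X, i.e., a finite family of nonempty subsets of X such that X ∈ F, {x} ∈ F for every x ∈ X, any two members of F are disjoint or one contains the other, and every member C of F with at least two elements is the union of two disjoint nonempty members of F. For distinct a, b, c ∈ X, say the triple abc is ab-biased in F (written ab|_F c) if some C ∈ F satisfies a ∈ C, b ∈ C and c ∉ C. Then for any three distinct elements a, b, c of X, exactly one of ab|_F c, ac|_F b, bc|_F a holds. -/
import Mathlib


/-- A binary cluster family on ground set `X`: the family of clusters (leaf sets of
subtrees) of a rooted binary phylogenetic tree with leaf set `X`. -/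
def IsBinaryClusterFamily {α : Type*} [DecidableEq α]
    (X : Finset α) (F : Finset (Finset α)) : Prop :=
  (∀ C ∈ F, C.Nonempty ∧ C ⊆ X) ∧
  X ∈ F ∧
  (∀ x ∈ X, ({x} : Finset α) ∈ F) ∧
  (∀ C ∈ F, ∀ D ∈ F, Disjoint C D ∨ C ⊆ D ∨ D ⊆ C) ∧
  (∀ C ∈ F, 2 ≤ C.card →
    ∃ C₁ ∈ F, ∃ C₂ ∈ F, C₁.Nonempty ∧ C₂.Nonempty ∧ Disjoint C₁ C₂ ∧ C = C₁ ∪ C₂)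

/-- The triple `xyz` is `xy`-biased in `F` (written `xy|_F z`): some member of `F`
contains `x` and `y` but not `z`. -/
def Biased {α : Type*} [DecidableEq α] (F : Finset (Finset α)) (x y z : α) : Prop :=
  ∃ C ∈ F, x ∈ C ∧ y ∈ C ∧ z ∉ C

theorem biased_trichotomy {α : Type*} [DecidableEq α]
    (X : Finset α) (F : Finset (Finset α)) (hF : IsBinaryClusterFamily X F)
    (a b c : α) (ha : a ∈ X) (hb : b ∈ X) (hc : c ∈ X)
    (hab : a ≠ b) (hac : a ≠ c) (hbc : b ≠ c) :
    (Biased F a b c ∧ ¬ Biased F a c b ∧ ¬ Biased F b c a) ∨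
    (¬ Biased F a b c ∧ Biased F a c b ∧ ¬ Biased F b c a) ∨
    (¬ Biased F a b c ∧ ¬ Biased F a c b ∧ Biased F b c a) := by
  classical
  obtain ⟨hmem, hXF, hsing, hlam, hsplit⟩ := hF
  have excl : ∀ C ∈ F, ∀ D ∈ F, ∀ x p q : α, x ∈ C → x ∈ D → p ∈ C → p ∉ D →
      q ∈ D → q ∉ C → False := by
    intro C hC D hD x p q hxC hxD hpC hpD hqD hqC
    rcases hlam C hC D hD with h | h | h
    · exact (Finset.disjoint_left.mp h hxC) hxD
    · exact hpD (h hpC)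
    · exact hqC (h hqD)
  have e1 : Biased F a b c → ¬ Biased F a c b := by
    rintro ⟨C, hC, h1, h2, h3⟩ ⟨D, hD, g1, g2, g3⟩
    exact excl C hC D hD a b c h1 g1 h2 g3 g2 h3
  have e2 : Biased F a b c → ¬ Biased F b c a := by
    rintro ⟨C, hC, h1, h2, h3⟩ ⟨D, hD, g1, g2, g3⟩
    exact excl C hC D hD b a c h2 g1 h1 g3 g2 h3
  have e3 : Biased F a c b → ¬ Biased F b c a := by
    rintro ⟨C, hC, h1, h2, h3⟩ ⟨D, hD, g1, g2, g3⟩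
    exact excl C hC D hD c a b h2 g2 h1 g3 g1 h3
  suffices h : Biased F a b c ∨ Biased F a c b ∨ Biased F b c a by
    rcases h with h | h | h
    · exact Or.inl ⟨h, e1 h, e2 h⟩
    · exact Or.inr (Or.inl ⟨fun h' => e1 h' h, h, e3 h⟩)
    · exact Or.inr (Or.inr ⟨fun h' => e2 h' h, fun h' => e3 h' h, h⟩)
  set S := F.filter (fun C => a ∈ C ∧ b ∈ C ∧ c ∈ C) with hSdef
  have hSne : S.Nonempty := ⟨X, by simp [hSdef, hXF, ha, hb, hc]⟩
  obtain ⟨C, hCS, hmin⟩ := S.exists_min_image Finset.card hSne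
  rw [hSdef, Finset.mem_filter] at hCS
  obtain ⟨hCF, haC, hbC, hcC⟩ := hCS
  have h2 : 2 ≤ C.card := Finset.one_lt_card.mpr ⟨a, haC, b, hbC, hab⟩
  obtain ⟨C₁, h₁F, C₂, h₂F, h₁ne, h₂ne, hdj, hC⟩ := hsplit C hCF h2
  have hcard : C.card = C₁.card + C₂.card := by
    rw [hC, Finset.card_union_of_disjoint hdj]
  have hlt₁ : C₁.card < C.card := by
    rw [hcard]; exact Nat.lt_add_of_pos_right h₂ne.card_pos
  have hlt₂ : C₂.card < C.card := by
    rw [hcard]; exact Nat.lt_add_of_pos_left h₁ne.card_pos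
  have hnot₁ : ¬ (a ∈ C₁ ∧ b ∈ C₁ ∧ c ∈ C₁) := fun h =>
    absurd (hmin C₁ (by rw [hSdef, Finset.mem_filter]; exact ⟨h₁F, h⟩)) (not_le.mpr hlt₁)
  have hnot₂ : ¬ (a ∈ C₂ ∧ b ∈ C₂ ∧ c ∈ C₂) := fun h =>
    absurd (hmin C₂ (by rw [hSdef, Finset.mem_filter]; exact ⟨h₂F, h⟩)) (not_le.mpr hlt₂)
  have d12 : ∀ {x : α}, x ∈ C₁ → x ∉ C₂ := fun h => Finset.disjoint_left.mp hdj h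
  have d21 : ∀ {x : α}, x ∈ C₂ → x ∉ C₁ := fun h => Finset.disjoint_right.mp hdj h
  have hau : a ∈ C₁ ∪ C₂ := hC ▸ haC
  have hbu : b ∈ C₁ ∪ C₂ := hC ▸ hbC
  have hcu : c ∈ C₁ ∪ C₂ := hC ▸ hcC
  rcases Finset.mem_union.mp hau with ha1 | ha2 <;>
    rcases Finset.mem_union.mp hbu with hb1 | hb2 <;>
    rcases Finset.mem_union.mp hcu with hc1 | hc2
  · exact absurd ⟨ha1, hb1, hc1⟩ hnot₁
  · exact Or.inl ⟨C₁, h₁F, ha1, hb1, d21 hc2⟩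
  · exact Or.inr (Or.inl ⟨C₁, h₁F, ha1, hc1, d21 hb2⟩)
  · exact Or.inr (Or.inr ⟨C₂, h₂F, hb2, hc2, d12 ha1⟩)
  · exact Or.inr (Or.inr ⟨C₁, h₁F, hb1, hc1, d21 ha2⟩)
  · exact Or.inr (Or.inl ⟨C₂, h₂F, ha2, hc2, d12 hb1⟩)
  · exact Or.inl ⟨C₂, h₂F, ha2, hb2, d12 hc1⟩
  · exact absurd ⟨ha2, hb2, hc2⟩ hnot₂
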